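/- A nonzero tensor of alignment type III is not characterized by its scalar polynomial invariants: let T be a rank-r tensor on ℝ⁴ with T ≠ 0 such that every component of boost weight ≥ 0 vanishes. Then every full contraction of copies of T (for every number of copies and every perfect pairing) equals zero — the same values as all full contractions of the zero tensor — yet Λ·T ≠ 0 for every η-orthogonal matrix Λ. Hence T and the zero tensor share all scalar polynomial invariants but are not related by any frame transformation. -/
import Mathlib


open Matrix

/-- The null-frame Minkowski metric on `ℝ⁴` (indices 0,1,2,3 for 1,2,3,4); it equals its own
inverse, so it is also the inverse metric used in contractions. -/
noncomputable def eta : Fin 4 → Fin 4 → ℝ := fun a b =>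
  if (a = 0 ∧ b = 1) ∨ (a = 1 ∧ b = 0) then -1
  else if (a = 2 ∧ b = 2) ∨ (a = 3 ∧ b = 3) then 1 else 0

/-- The null-frame Minkowski metric as a matrix. -/
noncomputable def etaM : Matrix (Fin 4) (Fin 4) ℝ := Matrix.of eta

/-- The boost weight of a rank-`r` component index. -/
def bw {r : ℕ} (a : Fin r → Fin 4) : ℤ :=
  ((Finset.univ.filter fun i => a i = 0).card : ℤ) -
    ((Finset.univ.filter fun i => a i = 1).card : ℤ)

/-- Action of a frame-transformation matrix on a rank-`r` tensor. -/
noncomputable def act {r : ℕ} (Λ : Matrix (Fin 4) (Fin 4) ℝ) (T : (Fin r → Fin 4) → ℝ) :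
    (Fin r → Fin 4) → ℝ :=
  fun a => ∑ b : Fin r → Fin 4, (∏ i, Λ (b i) (a i)) * T b

/-- The full contraction of `k` copies of a rank-`r` tensor `T`, determined by a pairing of the
`k·r` combined index slots.  The pairing is encoded by a fixed-point-free involution `p`
together with a set `S` of representatives containing exactly one slot from each pair
`{i, p i}`; each pair contributes one factor of the inverse metric `η`. -/
noncomputable def contractionCopies {r k : ℕ} (T : (Fin r → Fin 4) → ℝ)
    (p : Fin k × Fin r → Fin k × Fin r) (S : Finset (Fin k × Fin r)) : ℝ :=
  ∑ f : Fin k × Fin r → Fin 4,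
    (∏ i ∈ S, eta (f i) (f (p i))) * ∏ m, T (fun j => f (m, j))

/-- weight of a single index value -/
def W : Fin 4 → ℤ := fun c => if c = 0 then 1 else if c = 1 then -1 else 0

lemma bw_eq_sum {r : ℕ} (a : Fin r → Fin 4) : bw a = ∑ i, W (a i) := by
  have h : ∀ c : Fin 4, W c = (if c = 0 then (1:ℤ) else 0) - (if c = 1 then (1:ℤ) else 0) := by
    decide
  simp only [h]
  rw [Finset.sum_sub_distrib, bw, Finset.sum_boole, Finset.sum_boole]

lemma eta_ne_zero {a b : Fin 4} (h : eta a b ≠ 0) : W a + W b = 0 := by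
  fin_cases a <;> fin_cases b <;> simp_all [eta, W]

lemma act_act {r : ℕ} (M Λ : Matrix (Fin 4) (Fin 4) ℝ) (T : (Fin r → Fin 4) → ℝ) :
    act M (act Λ T) = act (Λ * M) T := by
  funext a
  simp only [act, Finset.mul_sum]
  rw [Finset.sum_comm]
  refine Finset.sum_congr rfl fun c _ => ?_
  calc (∑ b : Fin r → Fin 4, (∏ i, M (b i) (a i)) * ((∏ i, Λ (c i) (b i)) * T c))
      = ∑ b : Fin r → Fin 4, (∏ i, Λ (c i) (b i) * M (b i) (a i)) * T c := by
        refine Finset.sum_congr rfl fun b _ => ?_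
        rw [Finset.prod_mul_distrib]; ring
    _ = (∑ b : Fin r → Fin 4, ∏ i, Λ (c i) (b i) * M (b i) (a i)) * T c := by
        rw [Finset.sum_mul]
    _ = (∏ i, (Λ * M) (c i) (a i)) * T c := by
        congr 1
        simp only [Matrix.mul_apply]
        rw [Finset.prod_univ_sum (fun _ => (Finset.univ : Finset (Fin 4)))
          (fun i x => Λ (c i) x * M x (a i)), Fintype.piFinset_univ]

lemma act_one {r : ℕ} (T : (Fin r → Fin 4) → ℝ) : act 1 T = T := by
  funext a
  simp only [act, Matrix.one_apply]
  rw [Finset.sum_eq_single a]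
  · simp
  · intro b _ hb
    obtain ⟨i, hi⟩ := Function.ne_iff.mp hb
    rw [Finset.prod_eq_zero (Finset.mem_univ i) (by simp [hi]), zero_mul]
  · intro h; exact absurd (Finset.mem_univ a) h

lemma act_zero {r : ℕ} (Λ : Matrix (Fin 4) (Fin 4) ℝ) :
    act Λ (0 : (Fin r → Fin 4) → ℝ) = 0 := by
  funext a; simp [act]

lemma etaM_sq : etaM * etaM = 1 := by
  ext i j
  fin_cases i <;> fin_cases j <;>
    simp [etaM, eta, Matrix.mul_apply, Fin.sum_univ_four, Matrix.one_apply]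

/-- a nonzero tensor of alignment type III is not characterized by its scalar
polynomial invariants: every full contraction of copies of it vanishes (as for the zero tensor),
yet no `η`-orthogonal frame transformation maps it to the zero tensor. -/
theorem typeIII_not_characterized
    {r : ℕ} (T : (Fin r → Fin 4) → ℝ) (hT : T ≠ 0)
    (hIII : ∀ a, 0 ≤ bw a → T a = 0) :
    (∀ (k : ℕ), 0 < k → ∀ (p : Fin k × Fin r → Fin k × Fin r) (S : Finset (Fin k × Fin r)),
      p ∘ p = id → (∀ i, p i ≠ i) → (∀ i, i ∈ S ↔ p i ∉ S) →
      contractionCopies T p S = 0) ∧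
    (∀ Λ : Matrix (Fin 4) (Fin 4) ℝ, Λᵀ * etaM * Λ = etaM → act Λ T ≠ 0) := by
  constructor
  · intro k hk p S hpp hpf hS
    unfold contractionCopies
    apply Finset.sum_eq_zero
    intro f _
    by_cases h1 : (∏ i ∈ S, eta (f i) (f (p i))) = 0
    · rw [h1, zero_mul]
    · suffices h2 : (∏ m, T (fun j => f (m, j))) = 0 by rw [h2, mul_zero]
      by_contra h2
      -- each eta factor is nonzero, so paired weights cancel
      have hpair : ∀ i ∈ S, W (f i) + W (f (p i)) = 0 := fun i hi =>
        eta_ne_zero (Finset.prod_ne_zero_iff.mp h1 i hi)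
      -- p is an involution
      have hpp' : ∀ x, p (p x) = x := fun x => congrFun hpp x
      have hpinj : Function.Injective p := Function.Involutive.injective hpp'
      -- S and its image under p partition the universe
      have hdisj : Disjoint S (S.image p) := by
        rw [Finset.disjoint_left]
        intro x hx hx'
        obtain ⟨i, hi, hpi⟩ := Finset.mem_image.mp hx'
        have : p x = i := by rw [← hpi, hpp']
        exact ((hS x).mp hx) (this ▸ hi)
      have hunion : S ∪ S.image p = Finset.univ := by
        apply Finset.eq_univ_of_forall
        intro x
        rcases Finset.decidableMem x S with hx | hx
        · exact Finset.mem_union_right _ (Finset.mem_image.mpr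
            ⟨p x, (hS (p x)).mpr (by rw [hpp']; exact hx), hpp' x⟩)
        · exact Finset.mem_union_left _ hx
      -- total weight over all slots is zero
      have htot : (∑ x : Fin k × Fin r, W (f x)) = 0 := by
        rw [← hunion, Finset.sum_union hdisj, Finset.sum_image fun a _ b _ h => hpinj h]
        rw [← Finset.sum_add_distrib]
        exact Finset.sum_eq_zero hpair
      -- but each copy has negative boost weight
      have hTm : ∀ m : Fin k, T (fun j => f (m, j)) ≠ 0 := fun m =>
        Finset.prod_ne_zero_iff.mp h2 m (Finset.mem_univ m)
      have hbw : ∀ m : Fin k, bw (fun j => f (m, j)) ≤ -1 := by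
        intro m
        by_contra hb
        push_neg at hb
        exact hTm m (hIII _ (by omega))
      have hsum : (∑ m : Fin k, bw (fun j => f (m, j))) ≤ -k := by
        calc (∑ m : Fin k, bw (fun j => f (m, j))) ≤ ∑ _m : Fin k, (-1 : ℤ) :=
              Finset.sum_le_sum fun m _ => hbw m
          _ = -k := by simp
      have : (∑ x : Fin k × Fin r, W (f x)) = ∑ m : Fin k, bw (fun j => f (m, j)) := by
        rw [Fintype.sum_prod_type]
        exact Finset.sum_congr rfl fun m _ => (bw_eq_sum _).symm
      rw [this] at htot
      omega
  · intro Λ hΛ h0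
    have hde : etaM.det ≠ 0 := by
      intro h
      have := congrArg Matrix.det etaM_sq
      rw [Matrix.det_mul, h, Matrix.det_one, mul_zero] at this
      exact zero_ne_one this
    have hdet : Λ.det ≠ 0 := by
      have h := congrArg Matrix.det hΛ
      rw [Matrix.det_mul, Matrix.det_mul, Matrix.det_transpose] at h
      intro hz
      rw [hz, mul_zero] at h
      exact hde h.symm
    have hmul : Λ * Λ⁻¹ = 1 := Matrix.mul_nonsing_inv Λ (isUnit_iff_ne_zero.mpr hdet)
    exact hT (by rw [← act_one T, ← hmul, ← act_act, h0, act_zero])
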